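/- Let R be a commutative ring and let f ∈ R((t)) be a formal Laurent series all of whose coefficients in negative degrees are nilpotent. If the coefficient of t⁰ in f is a unit of R, then f is invertible in R((t)), and the inverse of f again has all of its coefficients in negative degrees nilpotent; that is, f is a unit of the subring R((t))^√. -/

import Mathlib

open Finset in
private lemma nilNeg_mul {R : Type*} [CommRing R] {f g : LaurentSeries R}
    (hf : ∀ n : ℤ, n < 0 → IsNilpotent (f.coeff n))
    (hg : ∀ n : ℤ, n < 0 → IsNilpotent (g.coeff n)) :
    ∀ n : ℤ, n < 0 → IsNilpotent ((f * g).coeff n) := by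
  intro n hn
  rw [HahnSeries.coeff_mul]
  apply isNilpotent_sum
  intro ij hij
  rw [Finset.mem_addAntidiagonal] at hij
  rcases lt_or_ge ij.1 0 with h1 | h1
  · exact (Commute.all _ _).isNilpotent_mul_right (hf _ h1)
  · obtain ⟨-, -, hsum⟩ := hij
    have h2 : ij.2 < 0 := by omega
    exact (Commute.all _ _).isNilpotent_mul_left (hg _ h2)

/-- The subring of Laurent series with nilpotent negative coefficients. -/
private def nilNegSubring (R : Type*) [CommRing R] : Subring (LaurentSeries R) where
  carrier := {f | ∀ n : ℤ, n < 0 → IsNilpotent (f.coeff n)}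
  zero_mem' := by intro n hn; simp
  one_mem' := by
    intro n hn
    rw [HahnSeries.coeff_one, if_neg (by omega)]
    exact IsNilpotent.zero
  add_mem' := by
    intro a b ha hb n hn
    rw [HahnSeries.coeff_add]
    exact (Commute.all _ _).isNilpotent_add (ha n hn) (hb n hn)
  neg_mem' := by
    intro a ha n hn
    rw [HahnSeries.coeff_neg]
    exact (ha n hn).neg
  mul_mem' := fun ha hb => nilNeg_mul ha hb

private lemma ofPowerSeries_coeff_neg {R : Type*} [CommRing R] (x : PowerSeries R)
    (n : ℤ) (hn : n < 0) : (HahnSeries.ofPowerSeries ℤ R x).coeff n = 0 := by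
  rw [HahnSeries.ofPowerSeries_apply]
  apply HahnSeries.embDomain_notin_range
  rintro ⟨k, hk⟩
  have hk' : (k : ℤ) = n := hk
  omega

theorem nilLaurent_isUnit_of_coeff_zero_isUnit {R : Type*} [CommRing R]
    (f : LaurentSeries R)
    (hneg : ∀ n : ℤ, n < 0 → IsNilpotent (f.coeff n))
    (h0 : IsUnit (f.coeff 0)) :
    ∃ g : LaurentSeries R, f * g = 1 ∧ g * f = 1 ∧
      ∀ n : ℤ, n < 0 → IsNilpotent (g.coeff n) := by
  classical
  set p : PowerSeries R := PowerSeries.mk fun k => f.coeff (k : ℤ) with hp_def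
  have hpu : IsUnit p := by
    rw [PowerSeries.isUnit_iff_constantCoeff]
    simpa [hp_def] using h0
  obtain ⟨up, hup⟩ := hpu
  set g : LaurentSeries R := HahnSeries.ofPowerSeries ℤ R p with hg_def
  set gi : LaurentSeries R := HahnSeries.ofPowerSeries ℤ R ↑up⁻¹ with hgi_def
  have hggi : g * gi = 1 := by
    rw [hg_def, hgi_def, ← map_mul, ← hup, Units.mul_inv, map_one]
  have hgS : g ∈ nilNegSubring R := fun n hn => by
    rw [hg_def, ofPowerSeries_coeff_neg _ _ hn]; exact IsNilpotent.zero
  have hgiS : gi ∈ nilNegSubring R := fun n hn => by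
    rw [hgi_def, ofPowerSeries_coeff_neg _ _ hn]; exact IsNilpotent.zero
  have hfS : f ∈ nilNegSubring R := hneg
  -- the "negative part" of f
  set m : LaurentSeries R := f - g with hm_def
  have hm_coeff_nonneg : ∀ n : ℤ, 0 ≤ n → m.coeff n = 0 := by
    intro n hn
    lift n to ℕ using hn
    rw [hm_def, HahnSeries.coeff_sub, hg_def, HahnSeries.ofPowerSeries_apply_coeff,
      hp_def, PowerSeries.coeff_mk, sub_self]
  have hm_supp : m.support ⊆ Set.Iio 0 := by
    intro i hi
    by_contra h
    exact hi (hm_coeff_nonneg i (by simpa using h))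
  have hm_fin : m.support.Finite := by
    rcases eq_or_ne m 0 with h | h
    · rw [h, HahnSeries.support_zero]; exact Set.finite_empty
    · have hne : m.support.Nonempty := HahnSeries.support_nonempty_iff.2 h
      have hwf := m.isWF_support
      refine (Set.finite_Icc (hwf.min hne) (-1)).subset (fun i hi => ?_)
      exact ⟨hwf.min_le hne hi, by have := hm_supp hi; simp at this; omega⟩
  have hm_rep : m = ∑ i ∈ hm_fin.toFinset, HahnSeries.single i (m.coeff i) := by
    ext k
    have hsum : (∑ i ∈ hm_fin.toFinset, HahnSeries.single i (m.coeff i)).coeff k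
        = ∑ i ∈ hm_fin.toFinset, (HahnSeries.single i (m.coeff i)).coeff k :=
      map_sum (HahnSeries.coeff.addMonoidHom k) _ _
    rw [hsum, Finset.sum_eq_single k
      (fun b _ hb => HahnSeries.coeff_single_of_ne hb.symm)
      (fun hk => by
        rw [HahnSeries.coeff_single_same]
        by_contra h
        exact hk (hm_fin.mem_toFinset.2 h)),
      HahnSeries.coeff_single_same]
  have hm_nil : IsNilpotent m := by
    rw [hm_rep]
    apply isNilpotent_sum
    intro i hi
    have hineg : i < 0 := hm_supp (hm_fin.mem_toFinset.1 hi)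
    have hcnil : IsNilpotent (m.coeff i) := by
      rw [hm_def, HahnSeries.coeff_sub, hg_def, ofPowerSeries_coeff_neg _ _ hineg, sub_zero]
      exact hneg i hineg
    obtain ⟨k, hk⟩ := hcnil
    exact ⟨k, by rw [HahnSeries.single_pow, hk, HahnSeries.single_eq_zero]⟩
  set x : LaurentSeries R := m * gi with hx_def
  have hx_nil : IsNilpotent x := (Commute.all _ _).isNilpotent_mul_right hm_nil
  obtain ⟨K, hK⟩ := hx_nil
  set s : LaurentSeries R := ∑ k ∈ Finset.range K, (-x) ^ k with hs_def
  have hgeom : (1 + x) * s = 1 := by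
    have h1 : (-x) ^ K = 0 := by
      rw [show -x = (-1 : LaurentSeries R) * x by ring, mul_pow, hK, mul_zero]
    have h2 := geom_sum_mul (-x) K
    rw [h1] at h2
    linear_combination -h2
  set G : LaurentSeries R := gi * s with hG_def
  have key : f * G = 1 := by
    rw [hG_def, hx_def, hm_def] at *
    linear_combination hgeom + s * hggi
  have hGS : G ∈ nilNegSubring R := by
    apply Subring.mul_mem _ hgiS
    apply Subring.sum_mem
    intro k _
    apply Subring.pow_mem
    apply Subring.neg_mem
    exact Subring.mul_mem _ (Subring.sub_mem _ hfS hgS) hgiS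
  exact ⟨G, key, by rw [mul_comm]; exact key, hGS⟩
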